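/- An element a ∈ IS_n is an idempotent of the sandwich semigroup (IS_n, *) if and only if a is an idempotent of IS_n (i.e. aa = a) and dom(a) ⊆ A. -/

import Mathlib

open Equiv

/-- `IS n` : the symmetric inverse semigroup on `{1,…,n}`, modeled as partial
equivalences of `Fin n`.  Composition is left-to-right: `(x.trans y) t = y (x t)`. -/
abbrev IS (n : ℕ) := PEquiv (Fin n) (Fin n)

/-- The domain of a partial injective transformation. -/
def sdom {n : ℕ} (x : IS n) : Set (Fin n) := {a | (x a).isSome}

/-- The image of a partial injective transformation. -/
def sim {n : ℕ} (x : IS n) : Set (Fin n) := {b | (x.symm b).isSome}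

/-- The rank of a partial injective transformation: the cardinality of its image. -/
noncomputable def srank {n : ℕ} (x : IS n) : ℕ := Nat.card (sim x)

/-- The set `A = {1,…,k}` inside `Fin n`, i.e. the first `k` elements. -/
def SetA (n k : ℕ) : Set (Fin n) := {i | (i : ℕ) < k}

/-- The idempotent `e` acting identically on `A`, with `dom e = im e = A`. -/
def sandE (n k : ℕ) : IS n where
  toFun i := if (i : ℕ) < k then some i else none
  invFun i := if (i : ℕ) < k then some i else none
  inv a b := by
    split_ifs with h1 h2 <;>
      simp_all [Option.mem_def, eq_comm] <;> rintro rfl <;> omega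

/-- The sandwich multiplication `x * y = x e y` (left-to-right composition). -/
def smul (n k : ℕ) (x y : IS n) : IS n := (x.trans (sandE n k)).trans y

lemma sandE_apply (n k : ℕ) (i : Fin n) :
    sandE n k i = if (i : ℕ) < k then some i else none := rfl

lemma smul_apply' (n k : ℕ) (x y : IS n) (t : Fin n) :
    smul n k x y t = ((x t).bind (sandE n k)).bind y := rfl

lemma trans_apply' {n : ℕ} (x y : IS n) (t : Fin n) :
    x.trans y t = (x t).bind y := rfl

/-- `a` is an idempotent of `(IS_n, *)` iff `a` is an idempotent of
`IS_n` and `dom a ⊆ A`. -/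
theorem sandwich_idempotent_iff (n k : ℕ) (hk : 1 ≤ k) (hkn : k ≤ n) (a : IS n) :
    smul n k a a = a ↔ (a.trans a = a ∧ sdom a ⊆ SetA n k) := by
  constructor
  · intro h
    -- key: for any t with a t = some s, we get s < k, a s = some s, and s = t
    have key : ∀ t s : Fin n, a t = some s → (s : ℕ) < k ∧ a s = some s ∧ s = t := by
      intro t s hts
      have ht := congrArg (fun f : IS n => f t) h
      by_cases hs : (s : ℕ) < k
      · simp only [smul_apply', hts, sandE_apply, Option.bind_some, if_pos hs] at ht
        have hst : s = t := a.inj (b := s) ht hts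
        exact ⟨hs, ht, hst⟩
      · simp only [smul_apply', hts, sandE_apply, Option.bind_some, if_neg hs,
          Option.bind_none] at ht
        exact absurd ht (by simp)
    constructor
    · ext t s
      simp only [trans_apply', Option.mem_def]
      cases hts : a t with
      | none => simp
      | some u =>
        obtain ⟨_, hu, hut⟩ := key t u hts
        simp [Option.bind_some, hut ▸ hu, hut]
    · intro t ht
      simp only [sdom, Set.mem_setOf_eq, Option.isSome_iff_exists] at ht
      obtain ⟨s, hs⟩ := ht
      obtain ⟨hsk, _, hst⟩ := key t s hs
      exact hst ▸ hsk
  · rintro ⟨hi, hd⟩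
    ext t s
    simp only [smul_apply', Option.mem_def]
    cases hts : a t with
    | none => simp
    | some u =>
      -- from idempotency, a u = some u and u = t
      have hu : a u = some u := by
        have := congrArg (fun f : IS n => f t) hi
        simp only [trans_apply', hts, Option.bind_some] at this
        exact this
      have hut : u = t := a.inj (b := u) hu hts
      subst hut
      have htk : (u : ℕ) < k := hd (by simp [sdom, hts])
      simp [sandE_apply, htk, hts]
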